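/- Let P_1,...,P_n be points in R^m with squared distances whose associated matrix (d_{i,j} - d_{i,n} - d_{j,n})_{i,j=1..n-1} has rank r = min(n-1, m), and suppose all pairwise squared distances d_{i,j} (for i<j) are distinct. Then there exists a neighborhood N of (P_1,...,P_n) in (R^m)^n such that any two n-point configurations in N lie in the same orbit under the Euclidean group AO(m) if and only if they have the same multiset of squared pairwise distances. -/

import Mathlib

open scoped RealInnerProductSpace

/-- The multiset of squared pairwise distances of an `n`-point configuration in `ℝ^m`. -/
noncomputable def sqDistMultiset {n m : ℕ} (P : Fin n → EuclideanSpace ℝ (Fin m)) : Multiset ℝ :=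
  ((Finset.univ : Finset (Fin n × Fin n)).filter fun p => p.1 < p.2).val.map
    fun p => dist (P p.1) (P p.2) ^ 2

/-- Congruence: equal pairwise distances imply an ambient isometry. -/
theorem exists_isometry_of_dist_eq {n m : ℕ}
    (Q R : Fin (n + 1) → EuclideanSpace ℝ (Fin m))
    (h : ∀ i j, dist (Q i) (Q j) = dist (R i) (R j)) :
    ∃ g : EuclideanSpace ℝ (Fin m) ≃ᵢ EuclideanSpace ℝ (Fin m), ∀ i, R i = g (Q i) := by
  set u : Fin (n + 1) → EuclideanSpace ℝ (Fin m) := fun i => Q i - Q 0 with hu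
  set v : Fin (n + 1) → EuclideanSpace ℝ (Fin m) := fun i => R i - R 0 with hv
  have hnu : ∀ i, ‖u i‖ = ‖v i‖ := by
    intro i; simp only [hu, hv, ← dist_eq_norm]; exact h i 0
  have hnd : ∀ i j, ‖u i - u j‖ = ‖v i - v j‖ := by
    intro i j
    rw [hu, hv]
    simp only [sub_sub_sub_cancel_right, ← dist_eq_norm]
    exact h i j
  have hinner : ∀ i j, ⟪u i, u j⟫ = ⟪v i, v j⟫ := by
    intro i j
    rw [real_inner_eq_norm_mul_self_add_norm_mul_self_sub_norm_sub_mul_self_div_two,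
      real_inner_eq_norm_mul_self_add_norm_mul_self_sub_norm_sub_mul_self_div_two,
      hnu i, hnu j, hnd i j]
  set φ : (Fin (n + 1) → ℝ) →ₗ[ℝ] EuclideanSpace ℝ (Fin m) :=
    Fintype.linearCombination ℝ u with hφ
  set ψ : (Fin (n + 1) → ℝ) →ₗ[ℝ] EuclideanSpace ℝ (Fin m) :=
    Fintype.linearCombination ℝ v with hψ
  have hnorm : ∀ c, ‖φ c‖ = ‖ψ c‖ := by
    intro c
    have key : ⟪φ c, φ c⟫ = ⟪ψ c, ψ c⟫ := by
      simp only [hφ, hψ, Fintype.linearCombination_apply, sum_inner, inner_sum,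
        real_inner_smul_left, real_inner_smul_right]
      exact Finset.sum_congr rfl fun i _ => Finset.sum_congr rfl fun j _ => by rw [hinner]
    have := congrArg Real.sqrt key
    rwa [real_inner_self_eq_norm_mul_norm, real_inner_self_eq_norm_mul_norm,
      Real.sqrt_mul_self (norm_nonneg _), Real.sqrt_mul_self (norm_nonneg _)] at this
  have hker : LinearMap.ker φ = LinearMap.ker ψ := by
    ext c
    rw [LinearMap.mem_ker, LinearMap.mem_ker, ← norm_eq_zero, ← norm_eq_zero (a := ψ c), hnorm c]
  set T := (φ.quotKerEquivRange.symm.trans (Submodule.quotEquivOfEq _ _ hker)).trans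
      ψ.quotKerEquivRange with hT
  have hTapp : ∀ c : Fin (n + 1) → ℝ,
      (T ⟨φ c, LinearMap.mem_range_self φ c⟩ : EuclideanSpace ℝ (Fin m)) = ψ c := by
    intro c
    have h1 : φ.quotKerEquivRange.symm ⟨φ c, LinearMap.mem_range_self φ c⟩ =
        Submodule.Quotient.mk c := by
      apply φ.quotKerEquivRange.injective
      simp [LinearMap.quotKerEquivRange_apply_mk]
    rw [hT]
    simp only [LinearEquiv.trans_apply, h1, Submodule.quotEquivOfEq_mk,
      LinearMap.quotKerEquivRange_apply_mk]
  set Tiso : LinearMap.range φ →ₗᵢ[ℝ] EuclideanSpace ℝ (Fin m) :=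
    { toLinearMap := (LinearMap.range ψ).subtype ∘ₗ (T : LinearMap.range φ →ₗ[ℝ] LinearMap.range ψ)
      norm_map' := by
        rintro ⟨x, c, rfl⟩
        simp only [LinearMap.coe_comp, Function.comp_apply, Submodule.coe_subtype,
          LinearEquiv.coe_coe]
        rw [hTapp c]
        exact (hnorm c).symm } with hTiso
  set G := Tiso.extend.toLinearIsometryEquiv rfl with hG
  have hGu : ∀ i, G (u i) = v i := by
    intro i
    have e2 : φ (Pi.single i 1) = u i := by
      simp [hφ, Fintype.linearCombination_apply, Pi.single_apply]
    have hmem : u i ∈ LinearMap.range φ := ⟨Pi.single i 1, e2⟩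
    have e1 : G (u i) = Tiso ⟨u i, hmem⟩ := Tiso.extend_apply ⟨u i, hmem⟩
    have e3 : (Tiso ⟨u i, hmem⟩ : EuclideanSpace ℝ (Fin m)) = ψ (Pi.single i 1) := by
      simp only [hTiso, LinearIsometry.coe_mk, LinearMap.coe_comp, Function.comp_apply,
        Submodule.coe_subtype, LinearEquiv.coe_coe]
      have : (⟨u i, hmem⟩ : LinearMap.range φ) =
          ⟨φ (Pi.single i 1), LinearMap.mem_range_self φ _⟩ := by
        simp [e2]
      rw [this, hTapp]
    have e4 : ψ (Pi.single i 1) = v i := by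
      simp [hψ, Fintype.linearCombination_apply, Pi.single_apply]
    rw [e1, e3, e4]
  refine ⟨((IsometryEquiv.constVAdd (-(Q 0))).trans G.toIsometryEquiv).trans
    (IsometryEquiv.constVAdd (R 0)), fun i => ?_⟩
  simp only [IsometryEquiv.trans_apply, IsometryEquiv.constVAdd_apply,
    LinearIsometryEquiv.coe_toIsometryEquiv]
  have h5 : -(Q 0) +ᵥ Q i = u i := by
    simp only [hu, vadd_eq_add]
    abel
  rw [h5, hGu i, hv]
  simp only [vadd_eq_add]
  abel

theorem stmt7 {n m : ℕ} (P : Fin (n + 1) → EuclideanSpace ℝ (Fin m))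
    (d : Fin (n + 1) → Fin (n + 1) → ℝ)
    (hd : ∀ i j, d i j = dist (P i) (P j) ^ 2)
    (hrank : (Matrix.of fun i j : Fin n =>
        d i.castSucc j.castSucc - d i.castSucc (Fin.last n)
          - d j.castSucc (Fin.last n)).rank = min n m)
    (hdistinct : ∀ i j k l : Fin (n + 1), i < j → k < l →
        d i j = d k l → i = k ∧ j = l) :
    ∃ N ∈ nhds P, ∀ Q ∈ N, ∀ R ∈ N,
      ((∃ g : EuclideanSpace ℝ (Fin m) ≃ᵢ EuclideanSpace ℝ (Fin m),
          ∀ i, (R : Fin (n + 1) → EuclideanSpace ℝ (Fin m)) i = g (Q i)) ↔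
        sqDistMultiset Q = sqDistMultiset R) := by
  classical
  set S : Finset (Fin (n + 1) × Fin (n + 1)) :=
    (Finset.univ : Finset (Fin (n + 1) × Fin (n + 1))).filter (fun p => p.1 < p.2) with hS
  have hmemS : ∀ p : Fin (n + 1) × Fin (n + 1), p ∈ S ↔ p.1 < p.2 := by
    intro p; simp [hS]
  have hinj : ∀ p ∈ S, ∀ q ∈ S, d p.1 p.2 = d q.1 q.2 → p = q := by
    intro p hp q hq hpq
    obtain ⟨h1, h2⟩ := hdistinct p.1 p.2 q.1 q.2 ((hmemS p).1 hp) ((hmemS q).1 hq) hpq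
    exact Prod.ext h1 h2
  -- a positive separation ε between distinct d-values
  obtain ⟨ε, hε, hsep⟩ : ∃ ε > 0, ∀ p ∈ S, ∀ q ∈ S, p ≠ q → ε ≤ |d p.1 p.2 - d q.1 q.2| := by
    set T := (S ×ˢ S).filter (fun pq => pq.1 ≠ pq.2) with hT
    have hTmem : ∀ pq : (Fin (n + 1) × Fin (n + 1)) × Fin (n + 1) × Fin (n + 1),
        pq ∈ T ↔ (pq.1 ∈ S ∧ pq.2 ∈ S) ∧ pq.1 ≠ pq.2 := by
      intro pq; rw [hT, Finset.mem_filter, Finset.mem_product]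
    by_cases hne : T.Nonempty
    · refine ⟨T.inf' hne (fun pq => |d pq.1.1 pq.1.2 - d pq.2.1 pq.2.2|), ?_, ?_⟩
      · show 0 < _
        rw [Finset.lt_inf'_iff]
        rintro ⟨p, q⟩ hpq
        rw [hTmem] at hpq
        rw [abs_pos, sub_ne_zero]
        exact fun hdd => hpq.2 (hinj p hpq.1.1 q hpq.1.2 hdd)
      · intro p hp q hq hpq
        have hm : (p, q) ∈ T := (hTmem (p, q)).2 ⟨⟨hp, hq⟩, hpq⟩
        exact Finset.inf'_le _ hm
    · exact ⟨1, one_pos, fun p hp q hq hpq =>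
        absurd ⟨(p, q), (hTmem (p, q)).2 ⟨⟨hp, hq⟩, hpq⟩⟩ hne⟩
  set N : Set (Fin (n + 1) → EuclideanSpace ℝ (Fin m)) :=
    ⋂ p ∈ S, {Q | |dist (Q p.1) (Q p.2) ^ 2 - d p.1 p.2| < ε / 2} with hN
  have hNmem : ∀ Q, Q ∈ N ↔ ∀ p ∈ S, |dist (Q p.1) (Q p.2) ^ 2 - d p.1 p.2| < ε / 2 := by
    intro Q; simp [hN]
  refine ⟨N, ?_, ?_⟩
  · refine IsOpen.mem_nhds ?_ ?_
    · refine isOpen_biInter_finset fun p _ => ?_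
      have hc : Continuous fun Q : Fin (n + 1) → EuclideanSpace ℝ (Fin m) =>
          dist (Q p.1) (Q p.2) ^ 2 :=
        (Continuous.dist (continuous_apply p.1) (continuous_apply p.2)).pow 2
      have : {Q : Fin (n + 1) → EuclideanSpace ℝ (Fin m) |
          |dist (Q p.1) (Q p.2) ^ 2 - d p.1 p.2| < ε / 2} =
          (fun Q : Fin (n + 1) → EuclideanSpace ℝ (Fin m) => dist (Q p.1) (Q p.2) ^ 2) ⁻¹'
            (Metric.ball (d p.1 p.2) (ε / 2)) := by
        ext Q; simp [Metric.mem_ball, Real.dist_eq]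
      rw [this]
      exact Metric.isOpen_ball.preimage hc
    · rw [hNmem]
      intro p _
      rw [← hd, sub_self, abs_zero]
      exact half_pos hε
  · intro Q hQ R hR
    rw [hNmem] at hQ hR
    constructor
    · rintro ⟨g, hg⟩
      unfold sqDistMultiset
      refine Multiset.map_congr rfl fun p _ => ?_
      rw [hg p.1, hg p.2, g.dist_eq]
    · intro hmul
      have key : ∀ p ∈ S, dist (Q p.1) (Q p.2) ^ 2 = dist (R p.1) (R p.2) ^ 2 := by
        intro p hp
        have filt : ∀ f : Fin (n + 1) × Fin (n + 1) → ℝ,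
            (∀ q ∈ S, |f q - d q.1 q.2| < ε / 2) →
            S.filter ((fun x => |x - d p.1 p.2| < ε / 2) ∘ f) = {p} := by
          intro f hf
          ext q
          simp only [Finset.mem_filter, Finset.mem_singleton, Function.comp_apply]
          constructor
          · rintro ⟨hqS, hq⟩
            by_contra hne
            have h1 := hsep q hqS p hp hne
            have h2 := hf q hqS
            have h3 : |d q.1 q.2 - d p.1 p.2| ≤ |d q.1 q.2 - f q| + |f q - d p.1 p.2| :=
              abs_sub_le _ _ _
            rw [abs_sub_comm (d q.1 q.2) (f q)] at h3
            linarith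
          · rintro rfl
            exact ⟨hp, hf _ hp⟩
        have hfiltQ := filt (fun q => dist (Q q.1) (Q q.2) ^ 2) hQ
        have hfiltR := filt (fun q => dist (R q.1) (R q.2) ^ 2) hR
        have e1 : Multiset.filter (fun x => |x - d p.1 p.2| < ε / 2) (sqDistMultiset Q) =
            {dist (Q p.1) (Q p.2) ^ 2} := by
          unfold sqDistMultiset
          rw [Multiset.filter_map, ← Finset.filter_val, ← hS, hfiltQ]
          rfl
        have e2 : Multiset.filter (fun x => |x - d p.1 p.2| < ε / 2) (sqDistMultiset R) =
            {dist (R p.1) (R p.2) ^ 2} := by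
          unfold sqDistMultiset
          rw [Multiset.filter_map, ← Finset.filter_val, ← hS, hfiltR]
          rfl
        have : ({dist (Q p.1) (Q p.2) ^ 2} : Multiset ℝ) = {dist (R p.1) (R p.2) ^ 2} := by
          rw [← e1, ← e2, hmul]
        exact Multiset.singleton_inj.1 this
      have hdist : ∀ i j, dist (Q i) (Q j) = dist (R i) (R j) := by
        intro i j
        rcases lt_trichotomy i j with hij | rfl | hij
        · have h2 := key (i, j) ((hmemS (i, j)).2 hij)
          calc dist (Q i) (Q j) = √(dist (Q i) (Q j) ^ 2) := (Real.sqrt_sq dist_nonneg).symm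
            _ = √(dist (R i) (R j) ^ 2) := by rw [h2]
            _ = dist (R i) (R j) := Real.sqrt_sq dist_nonneg
        · simp
        · have h2 := key (j, i) ((hmemS (j, i)).2 hij)
          rw [dist_comm, dist_comm (R i)]
          calc dist (Q j) (Q i) = √(dist (Q j) (Q i) ^ 2) := (Real.sqrt_sq dist_nonneg).symm
            _ = √(dist (R j) (R i) ^ 2) := by rw [h2]
            _ = dist (R j) (R i) := Real.sqrt_sq dist_nonneg
      exact exists_isometry_of_dist_eq Q R hdist
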